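/- Let X be a non-separable k_ω-space without nontrivial convergent sequences such that the free Abelian topological group A(X) is snf-countable. Then A(X) does not have a suitable set. -/

import Mathlib

open Filter Topology

/-- A suitable set: discrete as a subspace, `S ∪ {1}` closed, generating a dense
subgroup. -/
def IsSuitable {G : Type*} [Group G] [TopologicalSpace G] (S : Set G) : Prop :=
  (∀ x ∈ S, ∃ U : Set G, IsOpen U ∧ U ∩ S = {x}) ∧ IsClosed (S ∪ {1}) ∧
    Dense (Subgroup.closure S : Set G)

/-- `Y` is snf-countable: at every point there is a countable directed family of
sequential neighborhoods forming a network at that point. -/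
def SnfCountable (Y : Type*) [TopologicalSpace Y] : Prop :=
  ∃ P : Y → ℕ → Set Y,
    (∀ y n, y ∈ P y n) ∧
    (∀ y n, ∀ u : ℕ → Y, Tendsto u atTop (𝓝 y) → ∀ᶠ k in atTop, u k ∈ P y n) ∧
    (∀ y n m, ∃ k, P y k ⊆ P y n ∩ P y m) ∧
    (∀ y, ∀ U : Set Y, IsOpen U → y ∈ U → ∃ n, P y n ⊆ U)

section Aux

open Set Uniformity

/-- Type copy used to install an auxiliary uniform structure. -/
def UCopy (A : Type u) : Type u := A

def toUCopy {A : Type u} : A → UCopy A := id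
def ofUCopy {A : Type u} : UCopy A → A := id

@[simp] lemma ofUCopy_toUCopy {A : Type u} (a : A) : ofUCopy (toUCopy a) = a := rfl

/-- In a topological group, a point can be separated from the complement of an open
neighborhood of `1` by a real-valued continuous function. -/
lemma exists_sep_one {A : Type*} [TopologicalSpace A] [Group A] [IsTopologicalGroup A]
    {U : Set A} (hU : IsOpen U) (h1 : (1 : A) ∈ U) :
    ∃ g : A → ℝ, Continuous g ∧ g 1 = 1 ∧ ∀ c, c ∉ U → g c = 0 := by
  classical
  -- a sequence of shrinking neighborhoods of 1
  obtain ⟨V, hVmem, hV0, hVsplit⟩ :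
      ∃ V : ℕ → Set A, (∀ n, V n ∈ 𝓝 1) ∧ V 0 ⊆ U ∧
        ∀ n, ∀ v ∈ V (n + 1), ∀ w ∈ V (n + 1), v / w ∈ V n := by
    have step : ∀ s : {s : Set A // s ∈ 𝓝 1}, ∃ t : {t : Set A // t ∈ 𝓝 1},
        ∀ v ∈ t.1, ∀ w ∈ t.1, v / w ∈ s.1 := by
      rintro ⟨s, hs⟩
      obtain ⟨t, ht, h⟩ := exists_nhds_split_inv hs
      exact ⟨⟨t, ht⟩, h⟩
    choose F hF using step
    refine ⟨fun n => (F^[n] ⟨U, hU.mem_nhds h1⟩).1, fun n => (F^[n] _).2,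
      by simp, fun n v hv w hw => ?_⟩
    have h' : F^[n + 1] (⟨U, hU.mem_nhds h1⟩ : {s : Set A // s ∈ 𝓝 1})
        = F (F^[n] ⟨U, hU.mem_nhds h1⟩) := Function.iterate_succ_apply' F n _
    have hv' : v ∈ (F (F^[n] ⟨U, hU.mem_nhds h1⟩)).1 := by rw [← h']; exact hv
    have hw' : w ∈ (F (F^[n] ⟨U, hU.mem_nhds h1⟩)).1 := by rw [← h']; exact hw
    exact hF _ v hv' w hw'
  have hV1 : ∀ n, (1 : A) ∈ V n := fun n => mem_of_mem_nhds (hVmem n)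
  have hVmono : ∀ n, V (n + 1) ⊆ V n := by
    intro n v hv
    have := hVsplit n v hv 1 (hV1 _)
    simpa using this
  have hVle : ∀ m n, m ≤ n → V n ⊆ V m := by
    intro m n h
    induction h with
    | refl => exact subset_rfl
    | step h ih => exact (hVmono _).trans ih
  have hVinv : ∀ n, ∀ v ∈ V (n + 1), v⁻¹ ∈ V n := by
    intro n v hv
    have := hVsplit n 1 (hV1 _) v hv
    simpa using this
  have hVmul : ∀ n, ∀ v ∈ V (n + 2), ∀ w ∈ V (n + 2), v * w ∈ V n := by
    intro n v hv w hw
    have hw' : w⁻¹ ∈ V (n + 1) := hVinv _ _ hw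
    have hv' : v ∈ V (n + 1) := hVmono _ hv
    have := hVsplit n v hv' w⁻¹ hw'
    simpa [div_inv_eq_mul] using this
  -- entourages on the copy
  set E : ℕ → Set (UCopy A × UCopy A) :=
    fun n => {p | (ofUCopy p.1)⁻¹ * ofUCopy p.2 ∈ V n} with hE
  letI uB : UniformSpace (UCopy A) := UniformSpace.ofCore
    { uniformity := ⨅ n, 𝓟 (E n)
      refl := le_iInf fun n => by
        simp only [le_principal_iff, Filter.mem_principal]
        rintro ⟨x, y⟩ (rfl : x = y)
        show (ofUCopy x)⁻¹ * ofUCopy x ∈ V n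
        simpa using hV1 n
      symm := by
        rw [Filter.tendsto_iInf]
        intro n
        rw [Filter.tendsto_principal]
        refine Filter.mem_iInf_of_mem (n + 1) ?_
        rw [Filter.mem_principal]
        rintro ⟨x, y⟩ hp
        show (ofUCopy y)⁻¹ * ofUCopy x ∈ V n
        have : ((ofUCopy x)⁻¹ * ofUCopy y)⁻¹ ∈ V n := hVinv _ _ hp
        simpa using this
      comp := le_iInf fun n => by
        rw [le_principal_iff]
        refine Filter.mem_of_superset
          (Filter.mem_lift' (Filter.mem_iInf_of_mem (n + 2) (Filter.mem_principal_self _))) ?_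
        rintro ⟨x, z⟩ ⟨y, hxy, hyz⟩
        show (ofUCopy x)⁻¹ * ofUCopy z ∈ V n
        have h' : ((ofUCopy x)⁻¹ * ofUCopy y) * ((ofUCopy y)⁻¹ * ofUCopy z) ∈ V n :=
          hVmul n _ hxy _ hyz
        simpa [mul_assoc] using h' }
  have hEmem : ∀ n, E n ∈ 𝓤 (UCopy A) :=
    fun n => Filter.mem_iInf_of_mem n (Filter.mem_principal_self _)
  letI : Filter.IsCountablyGenerated (𝓤 (UCopy A)) :=
    Filter.isCountablyGenerated_of_seq ⟨E, rfl⟩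
  -- continuity of the identity into the copy
  have hcont : Continuous (toUCopy : A → UCopy A) := by
    rw [continuous_iff_continuousAt]
    intro x
    unfold ContinuousAt
    rw [nhds_eq_comap_uniformity, Filter.tendsto_comap_iff]
    show Filter.Tendsto (fun y => ((toUCopy x, toUCopy y) : UCopy A × UCopy A)) (𝓝 x)
      (⨅ n, 𝓟 (E n))
    rw [Filter.tendsto_iInf]
    intro n
    rw [Filter.tendsto_principal]
    have hc : ContinuousAt (fun y : A => x⁻¹ * y) x :=
      (continuous_const.mul continuous_id).continuousAt
    have hmem : V n ∈ 𝓝 (x⁻¹ * x) := by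
      rw [inv_mul_cancel]; exact hVmem n
    filter_upwards [hc hmem] with y hy
    exact hy
  letI P : PseudoMetricSpace (UCopy A) := UniformSpace.pseudoMetricSpace (UCopy A)
  obtain ⟨ε, hε, hball⟩ := Metric.mem_uniformity_dist.1 (hEmem 0)
  refine ⟨fun a => max 0 (1 - dist (toUCopy 1) (toUCopy a) / ε), ?_, ?_, ?_⟩
  · exact continuous_const.max
      ((continuous_const.sub ((continuous_const.dist hcont).div_const ε)))
  · simp [dist_self]
  · intro c hc
    have hdist : ¬ dist (toUCopy (1 : A)) (toUCopy c) < ε := by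
      intro hlt
      have h1' : (toUCopy (1 : A), toUCopy c) ∈ E 0 := hball hlt
      have h2' : c ∈ V 0 := by simpa [hE, ofUCopy, toUCopy] using h1'
      exact hc (hV0 h2')
    have hle : (1 : ℝ) ≤ dist (toUCopy (1 : A)) (toUCopy c) / ε :=
      (one_le_div hε).2 (not_lt.1 hdist)
    have h0 : 1 - dist (toUCopy (1 : A)) (toUCopy c) / ε ≤ 0 := by linarith
    exact max_eq_left h0

/-- In a topological group, a point can be separated from a closed set by a real-valued
continuous function. -/
lemma exists_sep {A : Type*} [TopologicalSpace A] [Group A] [IsTopologicalGroup A]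
    {C : Set A} (hC : IsClosed C) {a₀ : A} (ha : a₀ ∉ C) :
    ∃ g : A → ℝ, Continuous g ∧ g a₀ = 1 ∧ ∀ c ∈ C, g c = 0 := by
  have hU : IsOpen ((fun a => a₀ * a) ⁻¹' Cᶜ) :=
    hC.isOpen_compl.preimage (continuous_const.mul continuous_id)
  have h1 : (1 : A) ∈ (fun a => a₀ * a) ⁻¹' Cᶜ := by simpa using ha
  obtain ⟨g, hg, hg1, hg0⟩ := exists_sep_one hU h1
  refine ⟨fun a => g (a₀⁻¹ * a), hg.comp (continuous_const.mul continuous_id), ?_, ?_⟩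
  · simpa using hg1
  · intro c hc
    refine hg0 _ ?_
    simp [hc]

/-- Every element of the subgroup generated by a set lies in the subgroup generated by
the image of a countable subset. -/
lemma aux_countable_supp {X : Type u} {A : Type u} [CommGroup A] (i : X → A) {a : A}
    (ha : a ∈ Subgroup.closure (Set.range i)) :
    ∃ T : Set X, T.Countable ∧ a ∈ Subgroup.closure (i '' T) := by
  refine Subgroup.closure_induction
    (p := fun a _ => ∃ T : Set X, T.Countable ∧ a ∈ Subgroup.closure (i '' T))
    ?_ ?_ ?_ ?_ ha
  · rintro x ⟨y, rfl⟩
    exact ⟨{y}, Set.countable_singleton y,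
      Subgroup.subset_closure ⟨y, Set.mem_singleton y, rfl⟩⟩
  · exact ⟨∅, Set.countable_empty, one_mem _⟩
  · rintro x y _ _ ⟨T1, hc1, h1⟩ ⟨T2, hc2, h2⟩
    exact ⟨T1 ∪ T2, hc1.union hc2,
      mul_mem (Subgroup.closure_mono (Set.image_mono Set.subset_union_left) h1)
        (Subgroup.closure_mono (Set.image_mono Set.subset_union_right) h2)⟩
  · rintro x _ ⟨T, hc, h⟩
    exact ⟨T, hc, inv_mem h⟩

open Pointwise in
/-- If `X` is covered by countably many compact sets and `i : X → A` generates `A`, then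
`A` is covered by countably many compact sets. -/
lemma aux_cover {X : Type u} [TopologicalSpace X] {A : Type u} [CommGroup A]
    [TopologicalSpace A] [IsTopologicalGroup A] (i : X → A) (hic : Continuous i)
    (hgen : Subgroup.closure (Set.range i) = ⊤)
    {K : ℕ → Set X} (hKcomp : ∀ n, IsCompact (K n)) (hKuniv : (⋃ n, K n) = Set.univ) :
    ∃ Q : ℕ × ℕ → Set A, (∀ p, IsCompact (Q p)) ∧ (⋃ p, Q p) = Set.univ := by
  set CX : ℕ → Set X := fun N => Set.accumulate K N with hCX
  have hCXcomp : ∀ N, IsCompact (CX N) := fun N => isCompact_accumulate hKcomp N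
  have hCXmono : Monotone CX := Set.monotone_accumulate
  set M : ℕ → Set A := fun N => (i '' CX N ∪ (i '' CX N)⁻¹) ∪ {1} with hM
  have hMcomp : ∀ N, IsCompact (M N) := fun N =>
    ((((hCXcomp N).image hic)).union (((hCXcomp N).image hic)).inv).union isCompact_singleton
  have hMinv : ∀ N, ∀ a ∈ M N, a⁻¹ ∈ M N := by
    intro N a ha
    rcases ha with (h | h) | h
    · exact Or.inl (Or.inr (Set.inv_mem_inv.2 h))
    · exact Or.inl (Or.inl (by rwa [Set.mem_inv] at h))
    · have h1 : a = 1 := h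
      right
      simp [h1]
  have hMinveq : ∀ N, (M N)⁻¹ = M N := by
    intro N; ext a
    rw [Set.mem_inv]
    constructor
    · intro h; simpa using hMinv N a⁻¹ h
    · intro h; exact hMinv N a h
  have hMmono : Monotone M := by
    intro a b hab
    exact Set.union_subset_union
      (Set.union_subset_union (Set.image_mono (hCXmono hab))
        (Set.inv_subset_inv.2 (Set.image_mono (hCXmono hab)))) subset_rfl
  have hpowcomp : ∀ N m, IsCompact (M N ^ m) := by
    intro N m
    induction m with
    | zero =>
        rw [pow_zero]
        rw [← Set.singleton_one]
        exact isCompact_singleton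
    | succ m ih => rw [pow_succ]; exact ih.mul (hMcomp N)
  refine ⟨fun p => M p.1 ^ p.2, fun p => hpowcomp p.1 p.2, ?_⟩
  rw [Set.eq_univ_iff_forall]
  intro a
  rw [Set.mem_iUnion]
  have ha : a ∈ Subgroup.closure (Set.range i) := by rw [hgen]; trivial
  have hex : ∃ N m, a ∈ M N ^ m := by
    refine Subgroup.closure_induction
      (p := fun a _ => ∃ N m, a ∈ M N ^ m) ?_ ?_ ?_ ?_ ha
    · rintro x ⟨y, rfl⟩
      have hy : y ∈ ⋃ n, K n := by rw [hKuniv]; trivial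
      obtain ⟨n, hn⟩ := Set.mem_iUnion.1 hy
      exact ⟨n, 1, by
        rw [pow_one]
        exact Or.inl (Or.inl ⟨y, Set.subset_accumulate hn, rfl⟩)⟩
    · exact ⟨0, 0, by rw [pow_zero]; exact Set.mem_one.2 rfl⟩
    · rintro x y hx hy ⟨N1, m1, h1⟩ ⟨N2, m2, h2⟩
      refine ⟨max N1 N2, m1 + m2, ?_⟩
      rw [pow_add]
      exact Set.mul_mem_mul (Set.pow_subset_pow_left (hMmono (le_max_left _ _)) h1)
        (Set.pow_subset_pow_left (hMmono (le_max_right _ _)) h2)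
    · rintro x hx ⟨N, m, h⟩
      refine ⟨N, m, ?_⟩
      have h' : x⁻¹ ∈ (M N ^ m)⁻¹ := by simpa [Set.mem_inv] using h
      rwa [← inv_pow, hMinveq] at h'
  obtain ⟨N, m, h⟩ := hex
  exact ⟨(N, m), h⟩

end Aux

/-- Let `X` be a non-separable `k_ω`-space without nontrivial convergent sequences and
let `A` be the free Abelian topological group over `X` (given by the universal property
for Abelian topological groups). If `A` is snf-countable, then `A` has no suitable
set. -/
theorem freeAbelianTopGroup_no_suitable_set {X : Type u} [TopologicalSpace X]
    (hnsep : ¬ TopologicalSpace.SeparableSpace X)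
    (hkω : ∃ K : ℕ → Set X, (∀ n, IsCompact (K n)) ∧ (⋃ n, K n) = Set.univ ∧
      ∀ C : Set X, (∀ n, IsClosed ((fun x : K n => (x : X)) ⁻¹' C)) → IsClosed C)
    (hnoconv : ∀ (u : ℕ → X) (x : X), Tendsto u atTop (𝓝 x) → ∀ᶠ n in atTop, u n = x)
    {A : Type u} [CommGroup A] [TopologicalSpace A] [IsTopologicalGroup A]
    (i : X → A) (hemb : Topology.IsEmbedding i)
    (hgen : Subgroup.closure (Set.range i) = ⊤)
    (huniv : ∀ (K : Type u) [CommGroup K] [TopologicalSpace K] [IsTopologicalGroup K]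
      (f : X → K), Continuous f → ∃ F : A →* K, Continuous F ∧ ∀ x, F (i x) = f x)
    (hsnf : SnfCountable A) :
    ¬ ∃ S : Set A, IsSuitable S := by
  classical
  rintro ⟨S, hdisc, hSclosed, hSdense⟩
  obtain ⟨K, hKcomp, hKuniv, -⟩ := hkω
  obtain ⟨P, hP1, hP2, -, hP4⟩ := hsnf
  choose Uo hUoOpen hUoS using hdisc
  have hUomem : ∀ a (ha : a ∈ S), a ∈ Uo a ha := by
    intro a ha
    have h : a ∈ Uo a ha ∩ S := by rw [hUoS a ha]; rfl
    exact h.1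
  -- Step B : S is uncountable
  have hSuncount : ¬ S.Countable := by
    intro hScnt
    refine hnsep ?_
    have hmemcl : ∀ a : A, a ∈ Subgroup.closure (Set.range i) := fun a => by
      rw [hgen]; trivial
    have hchoice : ∀ a : A, ∃ T : Set X, T.Countable ∧ a ∈ Subgroup.closure (i '' T) :=
      fun a => aux_countable_supp i (hmemcl a)
    choose T hTc hTmem using hchoice
    set Y : Set X := ⋃ s ∈ S, T s with hY
    have hYc : Y.Countable := hScnt.biUnion (fun s _ => hTc s)
    refine ⟨⟨Y, hYc, ?_⟩⟩
    by_contra hnd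
    obtain ⟨x₀, hx₀⟩ : ∃ x₀ : X, x₀ ∉ closure Y := by
      by_contra h
      push_neg at h
      exact hnd (fun x => h x)
    have hx₀' : i x₀ ∉ closure (i '' Y) := fun hmem' =>
      hx₀ (by rw [hemb.closure_eq_preimage_closure_image]; exact hmem')
    obtain ⟨g, hgcont, hg1, hg0⟩ := exists_sep isClosed_closure hx₀'
    set f : X → Multiplicative (ULift.{u} ℝ) :=
      fun x => Multiplicative.ofAdd (ULift.up (g (i x))) with hf
    have hfcont : Continuous f :=
      continuous_ofAdd.comp (continuous_uliftUp.comp (hgcont.comp hemb.continuous))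
    obtain ⟨F, hFcont, hFi⟩ := huniv (Multiplicative (ULift.{u} ℝ)) f hfcont
    have hkerY : Subgroup.closure (i '' Y) ≤ F.ker := by
      rw [Subgroup.closure_le]
      rintro a ⟨y, hy, rfl⟩
      simp only [SetLike.mem_coe, MonoidHom.mem_ker]
      rw [hFi]
      have hgy : g (i y) = 0 := hg0 _ (subset_closure ⟨y, hy, rfl⟩)
      simp only [hf, hgy]
      rfl
    have hkerS : Subgroup.closure S ≤ F.ker := by
      rw [Subgroup.closure_le]
      intro s hs
      have hsY : s ∈ Subgroup.closure (i '' Y) := by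
        refine Subgroup.closure_mono (Set.image_mono ?_) (hTmem s)
        exact Set.subset_biUnion_of_mem hs
      exact hkerY hsY
    have hclosed1 : IsClosed ({(1 : Multiplicative (ULift.{u} ℝ))} :
        Set (Multiplicative (ULift.{u} ℝ))) := by
      have hc : Continuous (fun z : Multiplicative (ULift.{u} ℝ) =>
          (Multiplicative.toAdd z).down) := continuous_uliftDown.comp continuous_toAdd
      have heq : ({(1 : Multiplicative (ULift.{u} ℝ))} : Set (Multiplicative (ULift.{u} ℝ))) =
          (fun z : Multiplicative (ULift.{u} ℝ) => (Multiplicative.toAdd z).down) ⁻¹' {0} := by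
        ext z
        constructor
        · rintro rfl
          rfl
        · intro hz
          have hz' : (Multiplicative.toAdd z).down = 0 := hz
          have : Multiplicative.toAdd z = 0 := ULift.ext _ _ hz'
          have : z = Multiplicative.ofAdd 0 := by
            rw [← this]
            rfl
          simp [this]
      rw [heq]
      exact isClosed_singleton.preimage hc
    have hker_closed : IsClosed (F ⁻¹' {1}) := hclosed1.preimage hFcont
    have hsubset : (Subgroup.closure S : Set A) ⊆ F ⁻¹' {1} := by
      intro a ha
      have := hkerS ha
      rw [MonoidHom.mem_ker] at this
      simp [this]
    have hall : F (i x₀) = 1 := by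
      have hmem : i x₀ ∈ closure (Subgroup.closure S : Set A) := by
        rw [hSdense.closure_eq]; trivial
      have := closure_minimal hsubset hker_closed hmem
      simpa using this
    rw [hFi] at hall
    have hcontr : (1 : ℝ) = 0 := by
      have := congrArg (fun z : Multiplicative (ULift.{u} ℝ) =>
        (Multiplicative.toAdd z).down) hall
      simpa [hf, hg1] using this
    norm_num at hcontr
  -- Step C : a compact set with uncountable trace on S
  obtain ⟨Q, hQcomp, hQuniv⟩ := aux_cover i hemb.continuous hgen hKcomp hKuniv
  obtain ⟨p₀, hp₀⟩ : ∃ p : ℕ × ℕ, ¬ (S ∩ Q p).Countable := by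
    by_contra h
    push_neg at h
    apply hSuncount
    have hS : S = ⋃ p, S ∩ Q p := by
      rw [← Set.inter_iUnion, hQuniv, Set.inter_univ]
    rw [hS]
    exact Set.countable_iUnion h
  set C : Set A := Q p₀ with hC
  have hCcomp : IsCompact C := hQcomp p₀
  set D : Set A := S ∩ C with hD
  have hDuncount : ¬ D.Countable := hp₀
  -- Step D : every injective sequence in D converges to 1
  have hTcomp : IsCompact ((S ∪ {1}) ∩ C) := hCcomp.inter_left hSclosed
  have hfin : ∀ V : Set A, IsOpen V → (1 : A) ∈ V → (D \ V).Finite := by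
    intro V hVopen hV1
    set cov : Option S → Set A := fun o => o.elim V (fun s => Uo s.1 s.2) with hcov
    have hcovopen : ∀ o, IsOpen (cov o) := by
      rintro (_ | s)
      · exact hVopen
      · exact hUoOpen _ _
    have hcover : (S ∪ {1}) ∩ C ⊆ ⋃ o, cov o := by
      rintro a ⟨ha, -⟩
      rcases ha with ha | ha
      · exact Set.mem_iUnion.2 ⟨some ⟨a, ha⟩, hUomem a ha⟩
      · refine Set.mem_iUnion.2 ⟨none, ?_⟩
        rw [Set.mem_singleton_iff] at ha
        rw [ha]
        exact hV1
    obtain ⟨t, ht⟩ := hTcomp.elim_finite_subcover cov hcovopen hcover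
    have hsub : D \ V ⊆ ⋃ o ∈ t, (Option.elim o ∅ (fun s => ({s.1} : Set A))) := by
      rintro d ⟨hdD, hdV⟩
      have hdT : d ∈ (S ∪ {1}) ∩ C := ⟨Or.inl hdD.1, hdD.2⟩
      obtain ⟨o, hot, hdo⟩ := Set.mem_iUnion₂.1 (ht hdT)
      cases o with
      | none => exact absurd hdo hdV
      | some s =>
          have hds : d ∈ Uo s.1 s.2 ∩ S := ⟨hdo, hdD.1⟩
          rw [hUoS s.1 s.2] at hds
          exact Set.mem_biUnion hot (by simp [hds])
    refine Set.Finite.subset ?_ hsub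
    refine Set.Finite.biUnion t.finite_toSet ?_
    rintro (_ | s) _
    · exact Set.finite_empty
    · exact Set.finite_singleton _
  have hconv : ∀ u : ℕ → A, (∀ k, u k ∈ D) → Function.Injective u →
      Tendsto u atTop (𝓝 (1 : A)) := by
    intro u hu hinj
    rw [tendsto_nhds]
    intro V hVopen hV1
    have hfinV := hfin V hVopen hV1
    have hsub : (u ⁻¹' V)ᶜ ⊆ u ⁻¹' (D \ V) := by
      intro k hk
      exact ⟨hu k, hk⟩
    have hfin' : ((u ⁻¹' V)ᶜ).Finite := (hfinV.preimage hinj.injOn).subset hsub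
    have hmem : u ⁻¹' V ∈ cofinite := by
      rw [mem_cofinite]
      exact hfin'
    rwa [Nat.cofinite_eq_atTop] at hmem
  -- Step E : each P 1 n misses only finitely many points of D
  have hPfin : ∀ n, (D \ P 1 n).Finite := by
    intro n
    by_contra hinf
    have hinf' : (D \ P 1 n).Infinite := hinf
    set e := Set.Infinite.natEmbedding _ hinf' with he
    have hconv' := hconv (fun k => (e k : A)) (fun k => (e k).2.1)
      (fun a b hab => e.injective (Subtype.coe_injective hab))
    have hev := hP2 1 n _ hconv'
    obtain ⟨k, hk⟩ := hev.exists
    exact (e k).2.2 hk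
  -- Step F : pick a point of D inside all P 1 n
  obtain ⟨d, hdD, hdP⟩ : ∃ d, d ∈ D ∧ ∀ n, d ∈ P 1 n := by
    by_contra h
    push_neg at h
    apply hDuncount
    have hsub : D ⊆ ⋃ n, (D \ P 1 n) := by
      intro d hd
      obtain ⟨n, hn⟩ := h d hd
      exact Set.mem_iUnion.2 ⟨n, hd, hn⟩
    exact (Set.countable_iUnion (fun n => (hPfin n).countable)).mono hsub
  have hdS : d ∈ S := hdD.1
  -- Step G : contradiction
  by_cases hcl : d ∈ closure ({1} : Set A)
  · -- then 1 belongs to the distinguishing open set of d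
    have h1U : (1 : A) ∈ Uo d hdS := by
      obtain ⟨y, hy1, hy2⟩ := mem_closure_iff.1 hcl (Uo d hdS) (hUoOpen d hdS) (hUomem d hdS)
      rw [Set.mem_singleton_iff] at hy2
      rwa [hy2] at hy1
    have hDd : (D \ {d}).Infinite := by
      have hnf : ¬ (D \ {d}).Finite := by
        intro hfin'
        apply hDuncount
        have hsub : D ⊆ (D \ {d}) ∪ {d} := by
          intro x hx
          by_cases hxd : x = d
          · exact Or.inr (by simp [hxd])
          · exact Or.inl ⟨hx, hxd⟩
        exact ((hfin'.union (Set.finite_singleton d)).countable).mono hsub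
      exact hnf
    set e := Set.Infinite.natEmbedding _ hDd with he
    have hconv' := hconv (fun k => (e k : A)) (fun k => (e k).2.1)
      (fun a b hab => e.injective (Subtype.coe_injective hab))
    have hev : ∀ᶠ k in atTop, (e k : A) ∈ Uo d hdS :=
      hconv' ((hUoOpen d hdS).mem_nhds h1U)
    obtain ⟨k, hk⟩ := hev.exists
    have hk' : (e k : A) ∈ Uo d hdS ∩ S := ⟨hk, (e k).2.1.1⟩
    rw [hUoS d hdS] at hk'
    exact (e k).2.2 hk'
  · have h1cl : (1 : A) ∉ closure ({d} : Set A) := by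
      intro h1
      apply hcl
      have himg : closure ({d} : Set A) = (Homeomorph.mulLeft d) '' closure ({1} : Set A) := by
        rw [Homeomorph.image_closure]
        congr 1
        simp
      rw [himg] at h1
      obtain ⟨z, hz, hz1⟩ := h1
      have hz1' : d * z = 1 := by simpa using hz1
      have hzd : z = d⁻¹ := eq_inv_of_mul_eq_one_right hz1'
      rw [hzd] at hz
      have hsub : closure ({1} : Set A) = ((⊥ : Subgroup A).topologicalClosure : Set A) :=
        (Subgroup.coe_topologicalClosure_bot A).symm
      rw [hsub] at hz ⊢
      have hzmem : d⁻¹ ∈ (⊥ : Subgroup A).topologicalClosure := hz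
      have hdmem : d ∈ (⊥ : Subgroup A).topologicalClosure := by
        simpa using inv_mem hzmem
      exact hdmem
    obtain ⟨n, hn⟩ := hP4 1 (closure ({d} : Set A))ᶜ isClosed_closure.isOpen_compl h1cl
    exact (hn (hdP n)) (subset_closure rfl)
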